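/- arXiv:0708.3107 — 2 statements merged into one kernel-verified Lean document; each statement's English description precedes it below -/
import Mathlib

section
/- Anderson's integral for n = 3: for reals x_1 < x_2 < x_3 and α_1, α_2, α_3 > 0, ∫∫_{x_1<y_1<x_2<y_2<x_3} (y_2-y_1) ∏_{i=1}^{2} ∏_{j=1}^{3} |y_i - x_j|^{α_j - 1} dy_1 dy_2 = [Γ(α_1)Γ(α_2)Γ(α_3)/Γ(α_1+α_2+α_3)] (x_2-x_1)^{α_1+α_2-1}(x_3-x_1)^{α_1+α_3-1}(x_3-x_2)^{α_2+α_3-1}. -/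
open MeasureTheory Set ContinuousLinearMap

noncomputable def Lmap (p q r s : ℝ) : ℝ×ℝ →L[ℝ] ℝ×ℝ :=
  (p • fst ℝ ℝ ℝ + q • snd ℝ ℝ ℝ).prod (r • fst ℝ ℝ ℝ + s • snd ℝ ℝ ℝ)

lemma Lmap_apply (p q r s : ℝ) (v : ℝ×ℝ) : Lmap p q r s v = (p*v.1+q*v.2, r*v.1+s*v.2) := by
  simp [Lmap, smul_eq_mul]

lemma Lmap_det (p q r s : ℝ) : (Lmap p q r s).det = p*s - q*r := by
  have h : (Lmap p q r s : ℝ×ℝ →ₗ[ℝ] ℝ×ℝ)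
      = Matrix.toLin (Module.Basis.finTwoProd ℝ) (Module.Basis.finTwoProd ℝ) !![p, q; r, s] := by
    apply (Module.Basis.finTwoProd ℝ).ext
    intro i
    fin_cases i <;>
      simp [Matrix.toLin_apply, Lmap_apply, Module.Basis.finTwoProd_zero, Module.Basis.finTwoProd_one,
        Fin.sum_univ_two, Matrix.mulVec, dotProduct] <;> norm_num
  rw [ContinuousLinearMap.det, h, LinearMap.det_toLin, Matrix.det_fin_two_of]

noncomputable def phi (x₁ x₂ x₃ : ℝ) : ℝ×ℝ → ℝ×ℝ := fun y =>
  ((y.1-x₁)*(y.2-x₁)/((x₂-x₁)*(x₃-x₁)), (x₂-y.1)*(y.2-x₂)/((x₂-x₁)*(x₃-x₂)))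

noncomputable def phi' (x₁ x₂ x₃ : ℝ) (y : ℝ×ℝ) : ℝ×ℝ →L[ℝ] ℝ×ℝ :=
  Lmap ((y.2-x₁)/((x₂-x₁)*(x₃-x₁))) ((y.1-x₁)/((x₂-x₁)*(x₃-x₁)))
       (-(y.2-x₂)/((x₂-x₁)*(x₃-x₂))) ((x₂-y.1)/((x₂-x₁)*(x₃-x₂)))

lemma phi_hasFDerivAt (x₁ x₂ x₃ : ℝ) (y : ℝ×ℝ) :
    HasFDerivAt (phi x₁ x₂ x₃) (phi' x₁ x₂ x₃ y) y := by
  have h1 : HasFDerivAt (fun y : ℝ×ℝ => (y.1-x₁)*(y.2-x₁)/((x₂-x₁)*(x₃-x₁)))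
      (((x₂-x₁)*(x₃-x₁))⁻¹ • ((y.1-x₁) • (snd ℝ ℝ ℝ) + (y.2-x₁) • (fst ℝ ℝ ℝ))) y := by
    have hf : HasFDerivAt (fun y : ℝ×ℝ => y.1 - x₁) (fst ℝ ℝ ℝ) y :=
      (hasFDerivAt_fst).sub_const x₁
    have hg : HasFDerivAt (fun y : ℝ×ℝ => y.2 - x₁) (snd ℝ ℝ ℝ) y :=
      (hasFDerivAt_snd).sub_const x₁
    have := (hf.mul hg).const_mul (((x₂-x₁)*(x₃-x₁))⁻¹)
    simpa [div_eq_inv_mul, mul_comm, smul_add] using this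
  have h2 : HasFDerivAt (fun y : ℝ×ℝ => (x₂-y.1)*(y.2-x₂)/((x₂-x₁)*(x₃-x₂)))
      (((x₂-x₁)*(x₃-x₂))⁻¹ • ((x₂-y.1) • (snd ℝ ℝ ℝ) + (y.2-x₂) • (-(fst ℝ ℝ ℝ)))) y := by
    have hf : HasFDerivAt (fun y : ℝ×ℝ => x₂ - y.1) (-(fst ℝ ℝ ℝ)) y :=
      (hasFDerivAt_fst).const_sub x₂
    have hg : HasFDerivAt (fun y : ℝ×ℝ => y.2 - x₂) (snd ℝ ℝ ℝ) y :=
      (hasFDerivAt_snd).sub_const x₂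
    have := (hf.mul hg).const_mul (((x₂-x₁)*(x₃-x₂))⁻¹)
    simpa [div_eq_inv_mul, mul_comm, smul_add] using this
  have := h1.prodMk h2
  refine this.congr_fderiv ?_
  symm
  apply ContinuousLinearMap.ext
  intro v
  have : phi' x₁ x₂ x₃ y v = _ := Lmap_apply _ _ _ _ v
  rw [this]
  simp [smul_eq_mul, mul_inv, div_eq_mul_inv]
  constructor <;> ring

lemma phi_injOn {x₁ x₂ x₃ : ℝ} (h12 : x₁ < x₂) (h23 : x₂ < x₃) :
    Set.InjOn (phi x₁ x₂ x₃) (Ioo x₁ x₂ ×ˢ Ioo x₂ x₃) := by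
  have ha : x₂ - x₁ ≠ 0 := by linarith
  have hb : x₃ - x₂ ≠ 0 := by linarith
  have hc : x₃ - x₁ ≠ 0 := by linarith
  rintro ⟨y₁, y₂⟩ ⟨⟨hy11, hy12⟩, hy21, hy22⟩ ⟨z₁, z₂⟩ ⟨⟨hz11, hz12⟩, hz21, hz22⟩ h
  rw [Prod.ext_iff] at h
  obtain ⟨h1, h2⟩ := h
  simp only [phi] at h1 h2
  rw [div_eq_div_iff (by positivity) (by positivity)] at h1 h2
  have e1 : (y₁-x₁)*(y₂-x₁) = (z₁-x₁)*(z₂-x₁) := by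
    field_simp at h1; linarith [h1]
  have e2 : (x₂-y₁)*(y₂-x₂) = (x₂-z₁)*(z₂-x₂) := by
    field_simp at h2; linarith [h2]
  have he1 : y₁ + y₂ = z₁ + z₂ := by
    have h5 : (x₂-x₁) * ((y₁+y₂) - (z₁+z₂)) = 0 := by linear_combination e1 + e2
    rcases mul_eq_zero.1 h5 with h | h
    · exact absurd h ha
    · linarith
  have he2 : y₁ * y₂ = z₁ * z₂ := by linear_combination e1 + x₁ * he1
  have hroot : (z₁ - y₁) * (z₁ - y₂) = 0 := by linear_combination (-z₁) * he1 + he2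
  rcases mul_eq_zero.1 hroot with h | h
  · have hz1 : z₁ = y₁ := by linarith
    have : z₂ = y₂ := by linarith
    simp [hz1, this]
  · exfalso; nlinarith

lemma phi_image {x₁ x₂ x₃ : ℝ} (h12 : x₁ < x₂) (h23 : x₂ < x₃) :
    phi x₁ x₂ x₃ '' (Ioo x₁ x₂ ×ˢ Ioo x₂ x₃)
      = {u : ℝ×ℝ | 0 < u.1 ∧ 0 < u.2 ∧ u.1 + u.2 < 1} := by
  have ha : (0:ℝ) < x₂ - x₁ := by linarith
  have hb : (0:ℝ) < x₃ - x₂ := by linarith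
  have hc : (0:ℝ) < x₃ - x₁ := by linarith
  ext u
  constructor
  · rintro ⟨⟨y₁, y₂⟩, hmem, rfl⟩
    obtain ⟨hm1, hm2⟩ := hmem
    simp only [Set.mem_Ioo] at hm1 hm2
    obtain ⟨hy11, hy12⟩ := hm1
    obtain ⟨hy21, hy22⟩ := hm2
    have p1 : (0:ℝ) < y₁ - x₁ := by simp at hy11 ⊢; linarith
    have p2 : (0:ℝ) < x₂ - y₁ := by simp at hy12 ⊢; linarith
    have p3 : (0:ℝ) < y₂ - x₁ := by simp at hy21 ⊢; linarith
    have p4 : (0:ℝ) < y₂ - x₂ := by simp at hy21 ⊢; linarith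
    have p5 : (0:ℝ) < x₃ - y₁ := by simp at hy12 ⊢; linarith
    have p6 : (0:ℝ) < x₃ - y₂ := by simp at hy22 ⊢; linarith
    simp only [Set.mem_setOf_eq, phi]
    refine ⟨div_pos (mul_pos p1 p3) (mul_pos ha hc),
      div_pos (mul_pos p2 p4) (mul_pos ha hb), ?_⟩
    have key : 1 - (y₁-x₁)*(y₂-x₁)/((x₂-x₁)*(x₃-x₁)) - (x₂-y₁)*(y₂-x₂)/((x₂-x₁)*(x₃-x₂))
        = (x₃-y₁)*(x₃-y₂)/((x₃-x₂)*(x₃-x₁)) := by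
      field_simp
      ring
    have hpos : (0:ℝ) < (x₃-y₁)*(x₃-y₂)/((x₃-x₂)*(x₃-x₁)) :=
      div_pos (mul_pos p5 p6) (mul_pos hb hc)
    linarith [key, hpos]
  · rintro ⟨hu1, hu2, hu3⟩
    set B := x₁ + x₂ + (x₃-x₁)*u.1 + (x₃-x₂)*u.2 with hBdef
    set C := (x₂-x₁)*(x₃-x₁)*u.1 - x₁^2 + B*x₁ with hCdef
    set q : ℝ → ℝ := fun t => t^2 - B*t + C with hqdef
    have hq1 : q x₁ = (x₂-x₁)*(x₃-x₁)*u.1 := by simp only [hqdef, hCdef]; ring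
    have hq2 : q x₂ = -((x₂-x₁)*(x₃-x₂)*u.2) := by simp only [hqdef, hCdef, hBdef]; ring
    have hq3 : q x₃ = (x₃-x₂)*(x₃-x₁)*(1-u.1-u.2) := by simp only [hqdef, hCdef, hBdef]; ring
    have hq1pos : 0 < q x₁ := by rw [hq1]; positivity
    have hq2neg : q x₂ < 0 := by rw [hq2]; simp; positivity
    have hq3pos : 0 < q x₃ := by
      rw [hq3]
      have h01 : 0 < 1 - u.1 - u.2 := by linarith
      positivity
    have hqc : Continuous q := by fun_prop
    have hy₁ : ∃ y₁ ∈ Ioo x₁ x₂, q y₁ = 0 := by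
      have := intermediate_value_Ioo' (le_of_lt h12) hqc.continuousOn
        (mem_Ioo.2 ⟨hq2neg, hq1pos⟩)
      obtain ⟨y₁, hy₁, hqy₁⟩ := this
      exact ⟨y₁, hy₁, hqy₁⟩
    have hy₂ : ∃ y₂ ∈ Ioo x₂ x₃, q y₂ = 0 := by
      have := intermediate_value_Ioo (le_of_lt h23) hqc.continuousOn
        (mem_Ioo.2 ⟨hq2neg, hq3pos⟩)
      obtain ⟨y₂, hy₂, hqy₂⟩ := this
      exact ⟨y₂, hy₂, hqy₂⟩
    obtain ⟨y₁, hy₁m, hqy₁⟩ := hy₁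
    obtain ⟨y₂, hy₂m, hqy₂⟩ := hy₂
    have hne : y₁ ≠ y₂ := ne_of_lt (lt_trans hy₁m.2 hy₂m.1)
    have hB : B = y₁ + y₂ := by
      have h5 : (y₁ - y₂) * ((y₁ + y₂) - B) = 0 := by
        simp only [hqdef] at hqy₁ hqy₂; linear_combination hqy₁ - hqy₂
      rcases mul_eq_zero.1 h5 with h | h
      · exact absurd (by linarith : y₁ = y₂) hne
      · linarith
    have hC : C = y₁ * y₂ := by
      simp only [hqdef] at hqy₁; linear_combination hqy₁ + y₁ * hB
    refine ⟨(y₁, y₂), ⟨hy₁m, hy₂m⟩, ?_⟩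
    have e1 : (y₁-x₁)*(y₂-x₁) = (x₂-x₁)*(x₃-x₁)*u.1 := by
      rw [← hq1]; simp only [hqdef]; linear_combination (x₁ : ℝ) * hB - hC
    have e2 : (x₂-y₁)*(y₂-x₂) = (x₂-x₁)*(x₃-x₂)*u.2 := by
      rw [show (x₂-x₁)*(x₃-x₂)*u.2 = -q x₂ by rw [hq2]; ring]
      simp only [hqdef]; linear_combination (-x₂ : ℝ) * hB + hC
    have : phi x₁ x₂ x₃ (y₁, y₂) = (u.1, u.2) := by
      simp only [phi, Prod.mk.injEq]
      constructor
      · rw [e1]; field_simp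
      · rw [e2]; field_simp
    simpa using this

lemma phi'_det {x₁ x₂ x₃ : ℝ} (h12 : x₁ < x₂) (h23 : x₂ < x₃) {y : ℝ×ℝ}
    (hy1 : y.1 < x₂) (hy2 : x₂ < y.2) :
    |(phi' x₁ x₂ x₃ y).det| = (y.2-y.1)/((x₂-x₁)*(x₃-x₂)*(x₃-x₁)) := by
  have ha : (0:ℝ) < x₂ - x₁ := by linarith
  have hb : (0:ℝ) < x₃ - x₂ := by linarith
  have hc : (0:ℝ) < x₃ - x₁ := by linarith
  rw [phi', Lmap_det]
  have : (y.2-x₁)/((x₂-x₁)*(x₃-x₁)) * ((x₂-y.1)/((x₂-x₁)*(x₃-x₂)))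
      - (y.1-x₁)/((x₂-x₁)*(x₃-x₁)) * (-(y.2-x₂)/((x₂-x₁)*(x₃-x₂)))
      = (y.2-y.1)/((x₂-x₁)*(x₃-x₂)*(x₃-x₁)) := by
    field_simp
    ring
  rw [this, abs_of_pos]
  exact div_pos (by linarith) (by positivity)

open intervalIntegral in
lemma beta_cpow_eq (p q : ℝ) : Set.EqOn (fun x : ℝ => ((x:ℂ) ^ ((p:ℂ)-1) * ((1:ℂ)-x) ^ ((q:ℂ)-1)))
    (fun x : ℝ => ((x ^ (p-1) * (1-x) ^ (q-1) : ℝ) : ℂ)) (Set.uIcc 0 1) := by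
  intro x hx
  rw [Set.uIcc_of_le (by norm_num)] at hx
  have h0 : (0:ℝ) ≤ x := hx.1
  have h1 : (0:ℝ) ≤ 1 - x := by linarith [hx.2]
  show (x:ℂ) ^ ((p:ℂ)-1) * ((1:ℂ)-x) ^ ((q:ℂ)-1) = _
  rw [show ((p:ℂ)-1) = ((p-1:ℝ):ℂ) by push_cast; ring,
    show ((q:ℂ)-1) = ((q-1:ℝ):ℂ) by push_cast; ring,
    show ((1:ℂ)-(x:ℂ)) = ((1-x:ℝ):ℂ) by push_cast; ring,
    ← Complex.ofReal_cpow h0, ← Complex.ofReal_cpow h1, ← Complex.ofReal_mul]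

lemma realBeta_intervalIntegrable {p q : ℝ} (hp : 0 < p) (hq : 0 < q) :
    IntervalIntegrable (fun x : ℝ => x ^ (p-1) * (1-x) ^ (q-1)) volume 0 1 := by
  have h := Complex.betaIntegral_convergent (u := (p:ℂ)) (v := (q:ℂ)) (by simpa) (by simpa)
  have h2 : IntervalIntegrable (fun x : ℝ => ((x ^ (p-1) * (1-x) ^ (q-1) : ℝ) : ℂ)) volume 0 1 :=
    h.congr (fun x hx => beta_cpow_eq p q (uIoc_subset_uIcc hx))
  constructor
  · exact h2.1.re.congr (Filter.Eventually.of_forall (fun x => by simp))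
  · exact h2.2.re.congr (Filter.Eventually.of_forall (fun x => by simp))

lemma realBeta_eq {p q : ℝ} (hp : 0 < p) (hq : 0 < q) :
    ∫ x in (0:ℝ)..1, x ^ (p-1) * (1-x) ^ (q-1)
      = Real.Gamma p * Real.Gamma q / Real.Gamma (p+q) := by
  have hc := Complex.Gamma_mul_Gamma_eq_betaIntegral (s := (p:ℂ)) (t := (q:ℂ)) (by simpa) (by simpa)
  have hbeta : Complex.betaIntegral p q = ((∫ x in (0:ℝ)..1, x ^ (p-1) * (1-x) ^ (q-1) : ℝ) : ℂ) := by
    rw [Complex.betaIntegral, intervalIntegral.integral_congr (beta_cpow_eq p q)]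
    exact intervalIntegral.integral_ofReal
  rw [hbeta] at hc
  have hΓ : Complex.Gamma ((p:ℂ)+(q:ℂ)) ≠ 0 := by
    rw [show ((p:ℂ)+(q:ℂ)) = ((p+q:ℝ):ℂ) by push_cast; ring, Complex.Gamma_ofReal]
    exact_mod_cast (Real.Gamma_pos_of_pos (by linarith)).ne'
  have : ((Real.Gamma p * Real.Gamma q / Real.Gamma (p+q) : ℝ) : ℂ)
      = ((∫ x in (0:ℝ)..1, x ^ (p-1) * (1-x) ^ (q-1) : ℝ) : ℂ) := by
    push_cast
    rw [← Complex.Gamma_ofReal, ← Complex.Gamma_ofReal, ← Complex.Gamma_ofReal]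
    push_cast
    field_simp at hc ⊢
    linear_combination hc
  exact_mod_cast this.symm

lemma scaled_beta_integrableOn {p q s : ℝ} (hp : 0 < p) (hq : 0 < q) (hs : 0 < s) :
    IntegrableOn (fun t : ℝ => t ^ (p-1) * (s-t) ^ (q-1)) (Ioc 0 s) volume := by
  have base := realBeta_intervalIntegrable hp hq
  have comp : IntervalIntegrable (fun x : ℝ => (s⁻¹*x) ^ (p-1) * (1-s⁻¹*x) ^ (q-1)) volume 0 s := by
    have := base.comp_mul_left (c := s⁻¹)
    simpa [div_eq_mul_inv, inv_inv, hs.ne'] using this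
  have comp2 : IntervalIntegrable
      (fun x : ℝ => s^(p+q-2) * ((s⁻¹*x) ^ (p-1) * (1-s⁻¹*x) ^ (q-1))) volume 0 s :=
    comp.const_mul _
  have := (intervalIntegrable_iff_integrableOn_Ioc_of_le hs.le).1 comp2
  refine this.congr_fun (fun t ht => ?_) measurableSet_Ioc
  obtain ⟨ht1, ht2⟩ := ht
  have h1 : s⁻¹ * t = t / s := by ring
  have h2 : 1 - s⁻¹*t = (s-t)/s := by field_simp
  beta_reduce
  rw [h2, h1, Real.div_rpow ht1.le hs.le, Real.div_rpow (by linarith) hs.le,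
    show p+q-2 = (p-1)+(q-1) by ring, Real.rpow_add hs]
  have n1 : s^(p-1) ≠ 0 := (Real.rpow_pos_of_pos hs _).ne'
  have n2 : s^(q-1) ≠ 0 := (Real.rpow_pos_of_pos hs _).ne'
  field_simp

lemma scaled_beta_integral {p q s : ℝ} (hp : 0 < p) (hq : 0 < q) (hs : 0 < s) :
    ∫ t in Ioo (0:ℝ) s, t ^ (p-1) * (s-t) ^ (q-1)
      = s ^ (p+q-1) * (Real.Gamma p * Real.Gamma q / Real.Gamma (p+q)) := by
  rw [← integral_Ioc_eq_integral_Ioo, ← intervalIntegral.integral_of_le hs.le]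
  have hsub : ∫ x in (0:ℝ)..1, (fun t : ℝ => t ^ (p-1) * (s-t) ^ (q-1)) (s*x)
      = s⁻¹ • ∫ t in (s*0)..(s*1), (fun t : ℝ => t ^ (p-1) * (s-t) ^ (q-1)) t :=
    intervalIntegral.integral_comp_mul_left (fun t : ℝ => t ^ (p-1) * (s-t) ^ (q-1)) hs.ne'
  rw [mul_zero, mul_one] at hsub
  have hcong : ∫ x in (0:ℝ)..1, (fun t : ℝ => t ^ (p-1) * (s-t) ^ (q-1)) (s*x)
      = ∫ x in (0:ℝ)..1, s^(p-1) * s^(q-1) * (x ^ (p-1) * (1-x) ^ (q-1)) := by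
    refine intervalIntegral.integral_congr (fun x hx => ?_)
    rw [Set.uIcc_of_le (by norm_num)] at hx
    simp only
    rw [show s - s*x = s*(1-x) by ring, Real.mul_rpow hs.le hx.1,
      Real.mul_rpow hs.le (by linarith [hx.2])]
    ring
  rw [hcong, intervalIntegral.integral_const_mul, realBeta_eq hp hq] at hsub
  have : ∫ t in (0:ℝ)..s, t ^ (p-1) * (s-t) ^ (q-1)
      = s * (s^(p-1) * s^(q-1) * (Real.Gamma p * Real.Gamma q / Real.Gamma (p+q))) := by
    rw [smul_eq_mul] at hsub
    field_simp at hsub ⊢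
    linarith [hsub]
  rw [this, show p+q-1 = 1 + ((p-1)+(q-1)) by ring, Real.rpow_add hs, Real.rpow_add hs,
    Real.rpow_one]
  ring

lemma dirichlet3 {α₁ α₂ α₃ : ℝ} (hα₁ : 0 < α₁) (hα₂ : 0 < α₂) (hα₃ : 0 < α₃) :
    IntegrableOn (fun u : ℝ×ℝ => u.1^(α₁-1) * u.2^(α₂-1) * (1-u.1-u.2)^(α₃-1))
      {u : ℝ×ℝ | 0 < u.1 ∧ 0 < u.2 ∧ u.1+u.2 < 1} volume ∧
    ∫ u in {u : ℝ×ℝ | 0 < u.1 ∧ 0 < u.2 ∧ u.1+u.2 < 1},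
        u.1^(α₁-1) * u.2^(α₂-1) * (1-u.1-u.2)^(α₃-1)
      = Real.Gamma α₁ * Real.Gamma α₂ * Real.Gamma α₃ / Real.Gamma (α₁+α₂+α₃) := by
  set G : ℝ×ℝ → ℝ := fun u => u.1^(α₁-1) * u.2^(α₂-1) * (1-u.1-u.2)^(α₃-1) with hGdef
  set T : Set (ℝ×ℝ) := {u : ℝ×ℝ | 0 < u.1 ∧ 0 < u.2 ∧ u.1+u.2 < 1} with hTdef
  have hTmeas : MeasurableSet T := by
    have : T = {u : ℝ×ℝ | 0 < u.1} ∩ ({u : ℝ×ℝ | 0 < u.2} ∩ {u : ℝ×ℝ | u.1+u.2 < 1}) := by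
      ext u; simp only [hTdef, Set.mem_setOf_eq, Set.mem_inter_iff]
    rw [this]
    exact ((isOpen_lt continuous_const continuous_fst).inter
      ((isOpen_lt continuous_const continuous_snd).inter
        (isOpen_lt (continuous_fst.add continuous_snd) continuous_const))).measurableSet
  have hGmeas : Measurable G := by
    rw [hGdef]; measurability
  set G₁ : ℝ×ℝ → ℝ := T.indicator G with hG₁def
  set C23 : ℝ := Real.Gamma α₂ * Real.Gamma α₃ / Real.Gamma (α₂+α₃) with hC23def
  have hslice : ∀ u₁ : ℝ, (fun u₂ => G₁ (u₁, u₂))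
      = if u₁ ∈ Ioo (0:ℝ) 1 then
          (Ioo (0:ℝ) (1-u₁)).indicator
            (fun u₂ => u₁^(α₁-1) * (u₂^(α₂-1) * ((1-u₁)-u₂)^(α₃-1)))
        else 0 := by
    intro u₁
    funext u₂
    by_cases h : u₁ ∈ Ioo (0:ℝ) 1
    · rw [if_pos h]
      by_cases h2 : u₂ ∈ Ioo (0:ℝ) (1-u₁)
      · rw [indicator_of_mem h2]
        have hmem : (u₁, u₂) ∈ T := by
          simp only [hTdef, Set.mem_setOf_eq]
          refine ⟨h.1, h2.1, ?_⟩
          have hc' : u₂ < 1 - u₁ := h2.2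
          show u₁ + u₂ < 1
          linarith
        rw [hG₁def, indicator_of_mem hmem, hGdef]
        simp only
        ring
      · rw [indicator_of_notMem h2]
        have hmem : (u₁, u₂) ∉ T := by
          simp only [hTdef, Set.mem_setOf_eq]
          rintro ⟨ha, hb, hc⟩
          have hc' : u₁ + u₂ < 1 := hc
          have hb' : (0:ℝ) < u₂ := hb
          exact h2 ⟨hb', by linarith⟩
        rw [hG₁def, indicator_of_notMem hmem]
    · rw [if_neg h]
      have hmem : (u₁, u₂) ∉ T := by
        simp only [hTdef, Set.mem_setOf_eq]
        rintro ⟨ha, hb, hc⟩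
        simp only [Set.mem_Ioo] at h
        push_neg at h
        have ha' : (0:ℝ) < u₁ := ha
        have hb' : (0:ℝ) < u₂ := hb
        have hc' : u₁ + u₂ < 1 := hc
        have := h ha'
        linarith
      rw [hG₁def, indicator_of_notMem hmem]
      rfl
  have hsliceint : ∀ u₁ : ℝ, Integrable (fun u₂ => G₁ (u₁, u₂)) volume := by
    intro u₁
    rw [hslice u₁]
    by_cases h : u₁ ∈ Ioo (0:ℝ) 1
    · rw [if_pos h]
      rw [integrable_indicator_iff measurableSet_Ioo]
      have hs : (0:ℝ) < 1 - u₁ := by have := h.2; linarith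
      exact (((scaled_beta_integrableOn hα₂ hα₃ hs).mono_set Ioo_subset_Ioc_self).const_mul _)
    · rw [if_neg h]
      exact integrable_zero _ _ _
  have hinner : ∀ u₁ : ℝ, (∫ u₂, G₁ (u₁, u₂))
      = (Ioo (0:ℝ) 1).indicator (fun t => t^(α₁-1) * ((1-t)^(α₂+α₃-1) * C23)) u₁ := by
    intro u₁
    rw [hslice u₁]
    by_cases h : u₁ ∈ Ioo (0:ℝ) 1
    · rw [if_pos h, indicator_of_mem h, integral_indicator measurableSet_Ioo,
        MeasureTheory.integral_const_mul]
      have hs : (0:ℝ) < 1 - u₁ := by have := h.2; linarith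
      rw [scaled_beta_integral hα₂ hα₃ hs]
    · rw [if_neg h, indicator_of_notMem h]
      simp
  have hH : Integrable ((Ioo (0:ℝ) 1).indicator
      (fun t => t^(α₁-1) * ((1-t)^(α₂+α₃-1) * C23))) volume := by
    rw [integrable_indicator_iff measurableSet_Ioo]
    have := (intervalIntegrable_iff_integrableOn_Ioc_of_le (by norm_num : (0:ℝ) ≤ 1)).1
      (realBeta_intervalIntegrable hα₁ (by linarith : (0:ℝ) < α₂+α₃))
    exact IntegrableOn.congr_fun ((this.mono_set Ioo_subset_Ioc_self).mul_const C23)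
      (fun t _ => by ring) measurableSet_Ioo
  have hG₁nonneg : ∀ u, 0 ≤ G₁ u := by
    intro u
    refine indicator_nonneg (fun v hv => ?_) u
    obtain ⟨h1, h2, h3⟩ := hv
    have h4 : (0:ℝ) < 1 - v.1 - v.2 := by linarith
    exact le_of_lt (mul_pos (mul_pos (Real.rpow_pos_of_pos h1 _)
      (Real.rpow_pos_of_pos h2 _)) (Real.rpow_pos_of_pos h4 _))
  have hG₁meas : AEStronglyMeasurable G₁ ((volume : Measure ℝ).prod (volume : Measure ℝ)) := by
    rw [← Measure.volume_eq_prod]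
    exact (hGmeas.indicator hTmeas).aestronglyMeasurable
  have hG₁int : Integrable G₁ ((volume : Measure ℝ).prod (volume : Measure ℝ)) := by
    rw [integrable_prod_iff hG₁meas]
    refine ⟨Filter.Eventually.of_forall hsliceint, ?_⟩
    refine hH.congr (Filter.Eventually.of_forall (fun u₁ => ?_))
    rw [← hinner u₁]
    refine integral_congr_ae (Filter.Eventually.of_forall (fun u₂ => ?_))
    exact (Real.norm_of_nonneg (hG₁nonneg _)).symm
  have hG₁int' : Integrable G₁ (volume : Measure (ℝ×ℝ)) := by
    rwa [Measure.volume_eq_prod]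
  constructor
  · rwa [← integrable_indicator_iff hTmeas]
  · rw [← integral_indicator hTmeas]
    show ∫ u, G₁ u = _
    rw [Measure.volume_eq_prod, integral_prod _ hG₁int]
    have : ∫ u₁ : ℝ, ∫ u₂ : ℝ, G₁ (u₁, u₂)
        = ∫ u₁ : ℝ, (Ioo (0:ℝ) 1).indicator (fun t => t^(α₁-1) * ((1-t)^(α₂+α₃-1) * C23)) u₁ :=
      integral_congr_ae (Filter.Eventually.of_forall hinner)
    rw [this, integral_indicator measurableSet_Ioo]
    have : ∫ t in Ioo (0:ℝ) 1, t^(α₁-1) * ((1-t)^(α₂+α₃-1) * C23)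
        = (∫ t in Ioo (0:ℝ) 1, t^(α₁-1) * (1-t)^(α₂+α₃-1)) * C23 := by
      rw [← MeasureTheory.integral_mul_const]
      exact integral_congr_ae (Filter.Eventually.of_forall (fun t => by ring))
    rw [this, ← integral_Ioc_eq_integral_Ioo,
      ← intervalIntegral.integral_of_le (by norm_num : (0:ℝ) ≤ 1),
      realBeta_eq hα₁ (by linarith : (0:ℝ) < α₂+α₃), hC23def]
    have hΓ23 : Real.Gamma (α₂+α₃) ≠ 0 := (Real.Gamma_pos_of_pos (by linarith)).ne'
    have hΓs : Real.Gamma (α₁+(α₂+α₃)) ≠ 0 := (Real.Gamma_pos_of_pos (by linarith)).ne'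
    rw [show α₁+α₂+α₃ = α₁+(α₂+α₃) by ring]
    field_simp

lemma point_eq {x₁ x₂ x₃ α₁ α₂ α₃ : ℝ} (h12 : x₁ < x₂) (h23 : x₂ < x₃) {y : ℝ×ℝ}
    (hy1 : x₁ < y.1) (hy2 : y.1 < x₂) (hy3 : x₂ < y.2) (hy4 : y.2 < x₃) :
    |(phi' x₁ x₂ x₃ y).det| •
      ((((x₂-x₁)*(x₃-x₂)*(x₃-x₁)) * (((x₂-x₁)*(x₃-x₁))^(α₁-1) * ((x₂-x₁)*(x₃-x₂))^(α₂-1)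
         * ((x₃-x₂)*(x₃-x₁))^(α₃-1)))
        * ((phi x₁ x₂ x₃ y).1^(α₁-1) * (phi x₁ x₂ x₃ y).2^(α₂-1)
            * (1-(phi x₁ x₂ x₃ y).1-(phi x₁ x₂ x₃ y).2)^(α₃-1)))
    = (y.2-y.1) * ((y.1-x₁)^(α₁-1)*(x₂-y.1)^(α₂-1)*(x₃-y.1)^(α₃-1))
        * ((y.2-x₁)^(α₁-1)*(y.2-x₂)^(α₂-1)*(x₃-y.2)^(α₃-1)) := by
  have ha : (0:ℝ) < x₂ - x₁ := by linarith
  have hb : (0:ℝ) < x₃ - x₂ := by linarith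
  have hc : (0:ℝ) < x₃ - x₁ := by linarith
  have p1 : (0:ℝ) < y.1 - x₁ := by linarith
  have p2 : (0:ℝ) < x₂ - y.1 := by linarith
  have p3 : (0:ℝ) < y.2 - x₁ := by linarith
  have p4 : (0:ℝ) < y.2 - x₂ := by linarith
  have p5 : (0:ℝ) < x₃ - y.1 := by linarith
  have p6 : (0:ℝ) < x₃ - y.2 := by linarith
  rw [phi'_det h12 h23 hy2 hy3, smul_eq_mul]
  simp only [phi]
  have e3 : 1 - (y.1-x₁)*(y.2-x₁)/((x₂-x₁)*(x₃-x₁)) - (x₂-y.1)*(y.2-x₂)/((x₂-x₁)*(x₃-x₂))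
      = (x₃-y.1)*(x₃-y.2)/((x₃-x₂)*(x₃-x₁)) := by
    field_simp
    ring
  rw [e3,
    Real.div_rpow (by positivity) (by positivity),
    Real.div_rpow (by positivity) (by positivity),
    Real.div_rpow (by positivity) (by positivity),
    Real.mul_rpow p1.le p3.le, Real.mul_rpow p2.le p4.le, Real.mul_rpow p5.le p6.le]
  have d1 : ((x₂-x₁)*(x₃-x₁))^(α₁-1) ≠ 0 := (Real.rpow_pos_of_pos (by positivity) _).ne'
  have d2 : ((x₂-x₁)*(x₃-x₂))^(α₂-1) ≠ 0 := (Real.rpow_pos_of_pos (by positivity) _).ne'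
  have d3 : ((x₃-x₂)*(x₃-x₁))^(α₃-1) ≠ 0 := (Real.rpow_pos_of_pos (by positivity) _).ne'
  field_simp

/-- Anderson's integral for `n = 3`. -/
theorem anderson_n3 (x₁ x₂ x₃ α₁ α₂ α₃ : ℝ)
    (h12 : x₁ < x₂) (h23 : x₂ < x₃)
    (hα₁ : 0 < α₁) (hα₂ : 0 < α₂) (hα₃ : 0 < α₃) :
    ∫ y₁ in x₁..x₂, ∫ y₂ in x₂..x₃,
        (y₂ - y₁) *
          (|y₁ - x₁| ^ (α₁ - 1) * |y₁ - x₂| ^ (α₂ - 1) * |y₁ - x₃| ^ (α₃ - 1)) *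
          (|y₂ - x₁| ^ (α₁ - 1) * |y₂ - x₂| ^ (α₂ - 1) * |y₂ - x₃| ^ (α₃ - 1)) =
      Real.Gamma α₁ * Real.Gamma α₂ * Real.Gamma α₃ /
          Real.Gamma (α₁ + α₂ + α₃) *
        ((x₂ - x₁) ^ (α₁ + α₂ - 1) * (x₃ - x₁) ^ (α₁ + α₃ - 1) *
          (x₃ - x₂) ^ (α₂ + α₃ - 1)) := by
  have ha : (0:ℝ) < x₂ - x₁ := by linarith
  have hb : (0:ℝ) < x₃ - x₂ := by linarith
  have hc : (0:ℝ) < x₃ - x₁ := by linarith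
  set Tset : Set (ℝ×ℝ) := {u : ℝ×ℝ | 0 < u.1 ∧ 0 < u.2 ∧ u.1+u.2 < 1} with hTdef
  set S : Set (ℝ×ℝ) := Ioo x₁ x₂ ×ˢ Ioo x₂ x₃ with hSdef
  set K : ℝ := ((x₂-x₁)*(x₃-x₂)*(x₃-x₁)) * (((x₂-x₁)*(x₃-x₁))^(α₁-1)
    * ((x₂-x₁)*(x₃-x₂))^(α₂-1) * ((x₃-x₂)*(x₃-x₁))^(α₃-1)) with hKdef
  set G : ℝ×ℝ → ℝ := fun u => u.1^(α₁-1) * u.2^(α₂-1) * (1-u.1-u.2)^(α₃-1) with hGdef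
  set F : ℝ×ℝ → ℝ := fun y => (y.2-y.1)
      * ((y.1-x₁)^(α₁-1)*(x₂-y.1)^(α₂-1)*(x₃-y.1)^(α₃-1))
      * ((y.2-x₁)^(α₁-1)*(y.2-x₂)^(α₂-1)*(x₃-y.2)^(α₃-1)) with hFdef
  obtain ⟨hGint, hGval⟩ := dirichlet3 hα₁ hα₂ hα₃
  have hSmeas : MeasurableSet S := measurableSet_Ioo.prod measurableSet_Ioo
  have hderiv : ∀ y ∈ S, HasFDerivWithinAt (phi x₁ x₂ x₃) (phi' x₁ x₂ x₃ y) S y :=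
    fun y _ => (phi_hasFDerivAt x₁ x₂ x₃ y).hasFDerivWithinAt
  have hinj := phi_injOn h12 h23
  have himg := phi_image h12 h23
  have hpoint : ∀ y ∈ S, (fun y => |(phi' x₁ x₂ x₃ y).det| • (K * G (phi x₁ x₂ x₃ y))) y = F y := by
    rintro ⟨y₁, y₂⟩ hy
    obtain ⟨hm1, hm2⟩ := hy
    simp only [Set.mem_Ioo] at hm1 hm2
    exact point_eq h12 h23 hm1.1 hm1.2 hm2.1 hm2.2
  have hKGint : IntegrableOn (fun u => K * G u) Tset volume := hGint.const_mul K
  have hFint : IntegrableOn F S volume := by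
    have := (integrableOn_image_iff_integrableOn_abs_det_fderiv_smul volume hSmeas hderiv hinj
      (fun u => K * G u)).1 (by rwa [himg])
    exact IntegrableOn.congr_fun this hpoint hSmeas
  have hchange := integral_image_eq_integral_abs_det_fderiv_smul volume hSmeas hderiv hinj
    (fun u => K * G u)
  rw [himg] at hchange
  have hSval : ∫ y in S, F y = K * (Real.Gamma α₁ * Real.Gamma α₂ * Real.Gamma α₃ /
      Real.Gamma (α₁ + α₂ + α₃)) := by
    rw [← setIntegral_congr_fun hSmeas hpoint, ← hchange, MeasureTheory.integral_const_mul, hGval]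
  -- reduce LHS to ∫ over S
  have step1 : ∫ y₁ in x₁..x₂, ∫ y₂ in x₂..x₃,
        (y₂ - y₁) *
          (|y₁ - x₁| ^ (α₁ - 1) * |y₁ - x₂| ^ (α₂ - 1) * |y₁ - x₃| ^ (α₃ - 1)) *
          (|y₂ - x₁| ^ (α₁ - 1) * |y₂ - x₂| ^ (α₂ - 1) * |y₂ - x₃| ^ (α₃ - 1))
      = ∫ y₁ in Ioo x₁ x₂, ∫ y₂ in Ioo x₂ x₃, F (y₁, y₂) := by
    rw [intervalIntegral.integral_of_le h12.le, integral_Ioc_eq_integral_Ioo]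
    refine setIntegral_congr_fun measurableSet_Ioo (fun y₁ hy₁ => ?_)
    rw [intervalIntegral.integral_of_le h23.le, integral_Ioc_eq_integral_Ioo]
    refine setIntegral_congr_fun measurableSet_Ioo (fun y₂ hy₂ => ?_)
    obtain ⟨h1, h2⟩ := hy₁
    obtain ⟨h3, h4⟩ := hy₂
    have a1 : |y₁ - x₁| = y₁ - x₁ := abs_of_pos (by linarith)
    have a2 : |y₁ - x₂| = x₂ - y₁ := by rw [abs_sub_comm]; exact abs_of_pos (by linarith)
    have a3 : |y₁ - x₃| = x₃ - y₁ := by rw [abs_sub_comm]; exact abs_of_pos (by linarith)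
    have a4 : |y₂ - x₁| = y₂ - x₁ := abs_of_pos (by linarith)
    have a5 : |y₂ - x₂| = y₂ - x₂ := abs_of_pos (by linarith)
    have a6 : |y₂ - x₃| = x₃ - y₂ := by rw [abs_sub_comm]; exact abs_of_pos (by linarith)
    rw [a1, a2, a3, a4, a5, a6]
  have step2 : ∫ y₁ in Ioo x₁ x₂, ∫ y₂ in Ioo x₂ x₃, F (y₁, y₂) = ∫ y in S, F y := by
    rw [hSdef]
    have hFint' : IntegrableOn F (Ioo x₁ x₂ ×ˢ Ioo x₂ x₃)
        ((volume : Measure ℝ).prod (volume : Measure ℝ)) := by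
      rw [← Measure.volume_eq_prod]; exact hFint
    rw [show (volume : Measure (ℝ×ℝ)) = (volume : Measure ℝ).prod (volume : Measure ℝ) from
      Measure.volume_eq_prod ℝ ℝ, setIntegral_prod F hFint']
  rw [step1, step2, hSval]
  -- final constant algebra
  have hK : K = (x₂-x₁)^(α₁+α₂-1) * (x₃-x₁)^(α₁+α₃-1) * (x₃-x₂)^(α₂+α₃-1) := by
    rw [hKdef, Real.mul_rpow ha.le hc.le, Real.mul_rpow ha.le hb.le, Real.mul_rpow hb.le hc.le,
    show α₁+α₂-1 = 1 + ((α₁-1)+(α₂-1)) by ring,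
    show α₁+α₃-1 = 1 + ((α₁-1)+(α₃-1)) by ring,
    show α₂+α₃-1 = 1 + ((α₂-1)+(α₃-1)) by ring,
    Real.rpow_add ha, Real.rpow_add hc, Real.rpow_add hb,
    Real.rpow_add ha, Real.rpow_add hc, Real.rpow_add hb,
    Real.rpow_one, Real.rpow_one, Real.rpow_one]
    ring
  rw [hK]
  ring
end

section
/- If Kadell's integral I_{λ;n}(α,β,γ) satisfies the recursion I_{λ;n}(α,β,γ) = I_{λ;n-1}(α+γ, β+γ, γ) · [Γ(α)Γ(β)/Γ(α+β+(n-1)γ)] · ∏_{i=1}^{n-1} Γ(λ_i+(n-i+1)γ)/Γ(λ_i+(n-i)γ), with λ a partition with λ_n = 0, and I_{0;1}(α,β,γ) = Γ(α)Γ(β)/Γ(α+β), then the closed-form product ∏_{1≤i<j≤n} Γ((j-i+1)γ+λ_i-λ_j)/Γ((j-i)γ+λ_i-λ_j) · ∏_{i=1}^n Γ(α+(n-i)γ+λ_i)Γ(β+(i-1)γ)/Γ(α+β+(2n-i-1)γ+λ_i) satisfies the same recursion and initial condition; i.e. this Gamma-product identity reduces the n-variable formula to the (n-1)-variable one. -/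
open Finset

/-- The Selberg–Kadell closed-form Gamma product, with the partition
`λ` indexed from `0`, so `λ_{i+1} = l i` for `0 ≤ i < n`. -/
noncomputable def kadellRHS (n : ℕ) (l : ℕ → ℕ) (α β γ : ℝ) : ℝ :=
  (∏ i ∈ Finset.range n, ∏ j ∈ Finset.Ioo i n,
      Real.Gamma (((j : ℝ) - i + 1) * γ + ((l i : ℝ) - l j)) /
        Real.Gamma (((j : ℝ) - i) * γ + ((l i : ℝ) - l j))) *
  ∏ i ∈ Finset.range n,
      Real.Gamma (α + ((n : ℝ) - 1 - i) * γ + l i) * Real.Gamma (β + i * γ) /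
        Real.Gamma (α + β + (2 * (n : ℝ) - i - 2) * γ + l i)

private lemma kadell_Bpart (m : ℕ) (l : ℕ → ℕ) (α β γ : ℝ) (h0 : l m = 0) :
    (∏ i ∈ Finset.range (m + 1),
      Real.Gamma (α + (((m + 1 : ℕ) : ℝ) - 1 - i) * γ + l i) * Real.Gamma (β + i * γ) /
        Real.Gamma (α + β + (2 * ((m + 1 : ℕ) : ℝ) - i - 2) * γ + l i)) =
    (∏ i ∈ Finset.range m,
      Real.Gamma (α + γ + ((m : ℝ) - 1 - i) * γ + l i) * Real.Gamma (β + γ + i * γ) /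
        Real.Gamma (α + γ + (β + γ) + (2 * (m : ℝ) - i - 2) * γ + l i)) *
      (Real.Gamma α * Real.Gamma β / Real.Gamma (α + β + (m : ℝ) * γ)) := by
  rw [Finset.prod_range_succ]
  -- rewrite both products in the common form P i * H i / Q i
  have hL : (∏ i ∈ Finset.range m,
      Real.Gamma (α + (((m + 1 : ℕ) : ℝ) - 1 - i) * γ + l i) * Real.Gamma (β + i * γ) /
        Real.Gamma (α + β + (2 * ((m + 1 : ℕ) : ℝ) - i - 2) * γ + l i)) =
      ((∏ i ∈ Finset.range m, Real.Gamma (α + ((m : ℝ) - i) * γ + l i)) *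
        ∏ i ∈ Finset.range m, Real.Gamma (β + i * γ)) /
        ∏ i ∈ Finset.range m, Real.Gamma (α + β + (2 * (m : ℝ) - i) * γ + l i) := by
    rw [← Finset.prod_mul_distrib, ← Finset.prod_div_distrib]
    refine Finset.prod_congr rfl fun i _ => ?_
    have e1 : α + (((m + 1 : ℕ) : ℝ) - 1 - i) * γ + l i = α + ((m : ℝ) - i) * γ + l i := by
      push_cast; ring
    have e2 : α + β + (2 * ((m + 1 : ℕ) : ℝ) - i - 2) * γ + l i
        = α + β + (2 * (m : ℝ) - i) * γ + l i := by push_cast; ring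
    rw [e1, e2]
  have hR : (∏ i ∈ Finset.range m,
      Real.Gamma (α + γ + ((m : ℝ) - 1 - i) * γ + l i) * Real.Gamma (β + γ + i * γ) /
        Real.Gamma (α + γ + (β + γ) + (2 * (m : ℝ) - i - 2) * γ + l i)) =
      ((∏ i ∈ Finset.range m, Real.Gamma (α + ((m : ℝ) - i) * γ + l i)) *
        ∏ i ∈ Finset.range m, Real.Gamma (β + ((i + 1 : ℕ) : ℝ) * γ)) /
        ∏ i ∈ Finset.range m, Real.Gamma (α + β + (2 * (m : ℝ) - i) * γ + l i) := by
    rw [← Finset.prod_mul_distrib, ← Finset.prod_div_distrib]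
    refine Finset.prod_congr rfl fun i _ => ?_
    have e1 : α + γ + ((m : ℝ) - 1 - i) * γ + l i = α + ((m : ℝ) - i) * γ + l i := by ring
    have e2 : β + γ + (i : ℝ) * γ = β + ((i + 1 : ℕ) : ℝ) * γ := by push_cast; ring
    have e3 : α + γ + (β + γ) + (2 * (m : ℝ) - i - 2) * γ + l i
        = α + β + (2 * (m : ℝ) - i) * γ + l i := by ring
    rw [e1, e2, e3]
  rw [hL, hR]
  have key : (∏ i ∈ Finset.range m, Real.Gamma (β + i * γ)) * Real.Gamma (β + (m : ℝ) * γ)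
      = (∏ i ∈ Finset.range m, Real.Gamma (β + ((i + 1 : ℕ) : ℝ) * γ)) * Real.Gamma β := by
    have h1 := Finset.prod_range_succ (fun i : ℕ => Real.Gamma (β + i * γ)) m
    have h2 := Finset.prod_range_succ' (fun i : ℕ => Real.Gamma (β + i * γ)) m
    rw [← h1, h2]
    norm_num
  have hlast : Real.Gamma (α + (((m + 1 : ℕ) : ℝ) - 1 - m) * γ + l m)
        * Real.Gamma (β + (m : ℝ) * γ) /
        Real.Gamma (α + β + (2 * ((m + 1 : ℕ) : ℝ) - m - 2) * γ + l m)
      = Real.Gamma α * Real.Gamma (β + (m : ℝ) * γ) / Real.Gamma (α + β + (m : ℝ) * γ) := by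
    rw [h0]
    have e1 : α + (((m + 1 : ℕ) : ℝ) - 1 - m) * γ + ((0 : ℕ) : ℝ) = α := by push_cast; ring
    have e2 : α + β + (2 * ((m + 1 : ℕ) : ℝ) - m - 2) * γ + ((0 : ℕ) : ℝ)
        = α + β + (m : ℝ) * γ := by push_cast; ring
    rw [e1, e2]
  rw [hlast]
  set P := ∏ i ∈ Finset.range m, Real.Gamma (α + ((m : ℝ) - i) * γ + l i)
  set X := ∏ i ∈ Finset.range m, Real.Gamma (β + i * γ)
  set Y := ∏ i ∈ Finset.range m, Real.Gamma (β + ((i + 1 : ℕ) : ℝ) * γ)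
  set Q := ∏ i ∈ Finset.range m, Real.Gamma (α + β + (2 * (m : ℝ) - i) * γ + l i)
  calc P * X / Q * (Real.Gamma α * Real.Gamma (β + (m : ℝ) * γ)
          / Real.Gamma (α + β + (m : ℝ) * γ))
      = P * Real.Gamma α / (Q * Real.Gamma (α + β + (m : ℝ) * γ))
          * (X * Real.Gamma (β + (m : ℝ) * γ)) := by ring
    _ = P * Real.Gamma α / (Q * Real.Gamma (α + β + (m : ℝ) * γ)) * (Y * Real.Gamma β) := by
          rw [key]
    _ = P * Y / Q * (Real.Gamma α * Real.Gamma β / Real.Gamma (α + β + (m : ℝ) * γ)) := by ring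

/-- The closed-form Gamma product satisfies the same recursion and initial
condition as Kadell's integral `I_{λ;n}(α,β,γ)`. -/
theorem kadellRHS_recursion_and_initial (α β γ : ℝ)
    (hα : 0 < α) (hβ : 0 < β) (hγ : 0 < γ) :
    (∀ l : ℕ → ℕ, l 0 = 0 → kadellRHS 1 l α β γ =
      Real.Gamma α * Real.Gamma β / Real.Gamma (α + β)) ∧
    (∀ n : ℕ, 2 ≤ n → ∀ l : ℕ → ℕ, (∀ i j, i ≤ j → l j ≤ l i) → l (n - 1) = 0 →
      kadellRHS n l α β γ =
        kadellRHS (n - 1) l (α + γ) (β + γ) γ *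
          (Real.Gamma α * Real.Gamma β / Real.Gamma (α + β + ((n : ℝ) - 1) * γ)) *
          ∏ i ∈ Finset.range (n - 1),
            Real.Gamma ((l i : ℝ) + ((n : ℝ) - i) * γ) /
              Real.Gamma ((l i : ℝ) + ((n : ℝ) - 1 - i) * γ)) := by
  constructor
  · intro l hl
    have h : Finset.Ioo 0 1 = (∅ : Finset ℕ) := rfl
    simp [kadellRHS, hl, h]
  · intro n hn l _ h0
    obtain ⟨m, rfl⟩ : ∃ m, n = m + 1 := ⟨n - 1, by omega⟩
    simp only [Nat.add_sub_cancel] at h0 ⊢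
    unfold kadellRHS
    -- split the A-part
    have hA : (∏ i ∈ Finset.range (m + 1), ∏ j ∈ Finset.Ioo i (m + 1),
        Real.Gamma (((j : ℝ) - i + 1) * γ + ((l i : ℝ) - l j)) /
          Real.Gamma (((j : ℝ) - i) * γ + ((l i : ℝ) - l j))) =
        (∏ i ∈ Finset.range m, ∏ j ∈ Finset.Ioo i m,
          Real.Gamma (((j : ℝ) - i + 1) * γ + ((l i : ℝ) - l j)) /
            Real.Gamma (((j : ℝ) - i) * γ + ((l i : ℝ) - l j))) *
        ∏ i ∈ Finset.range m,
          Real.Gamma ((l i : ℝ) + (((m + 1 : ℕ) : ℝ) - i) * γ) /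
            Real.Gamma ((l i : ℝ) + (((m + 1 : ℕ) : ℝ) - 1 - i) * γ) := by
      rw [Finset.prod_range_succ]
      have hmm : Finset.Ioo m (m + 1) = ∅ := by ext j; simp
      rw [hmm, Finset.prod_empty, mul_one, ← Finset.prod_mul_distrib]
      refine Finset.prod_congr rfl fun i hi => ?_
      have hi' : i < m := Finset.mem_range.mp hi
      have hIoo : Finset.Ioo i (m + 1) = insert m (Finset.Ioo i m) := by
        ext j; simp; omega
      rw [hIoo, Finset.prod_insert (by simp), mul_comm]
      congr 1
      rw [h0]
      have e1 : ((m : ℝ) - i + 1) * γ + ((l i : ℝ) - ((0 : ℕ) : ℝ))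
          = (l i : ℝ) + (((m + 1 : ℕ) : ℝ) - i) * γ := by push_cast; ring
      have e2 : ((m : ℝ) - i) * γ + ((l i : ℝ) - ((0 : ℕ) : ℝ))
          = (l i : ℝ) + (((m + 1 : ℕ) : ℝ) - 1 - i) * γ := by push_cast; ring
      rw [e1, e2]
    rw [hA, kadell_Bpart m l α β γ h0]
    have ecast : α + β + (((m + 1 : ℕ) : ℝ) - 1) * γ = α + β + (m : ℝ) * γ := by
      push_cast; ring
    rw [ecast]
    ring
end
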